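/- Let T be a vtree over a finite variable set X, and let C1 and C2 be two TDDs respecting T, of widths k and k' respectively. Then there exists a TDD C respecting T computing the conjunction f_{C1} ∧ f_{C2}, of size at most |C1|·|C2| and width at most k·k'. -/
import Mathlib


/-- A vtree: a rooted binary tree whose leaves are labeled by variables. -/
inductive Vtree (V : Type) where
  | leaf : V → Vtree V
  | node : Vtree V → Vtree V → Vtree V

namespace Vtree

variable {V : Type} [DecidableEq V]

/-- The set of variables labeling the leaves of a vtree. -/
def vars : Vtree V → Finset V
  | leaf x => {x}
  | node l r => l.vars ∪ r.vars

/-- A vtree is proper when its leaves carry pairwise distinct variables,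
so that the leaves are in one-to-one correspondence with `vars`. -/
def Proper : Vtree V → Prop
  | leaf _ => True
  | node l r => l.Proper ∧ r.Proper ∧ Disjoint l.vars r.vars

/-- `T.IsNode t` : `t` is (the subtree rooted at) a node of `T`. -/
def IsNode : Vtree V → Vtree V → Prop
  | leaf x, t => t = leaf x
  | node l r, t => t = node l r ∨ l.IsNode t ∨ r.IsNode t

/-- Remove every leaf whose variable is in `Y`, suppressing unary nodes.
Returns `none` if no leaf survives. -/
def restrict (Y : Finset V) : Vtree V → Option (Vtree V)
  | leaf x => if x ∈ Y then none else some (leaf x)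
  | node l r =>
    match l.restrict Y, r.restrict Y with
    | none, o => o
    | some l', none => some l'
    | some l', some r' => some (node l' r')

/-- The vtree `T ∖ x`. -/
def remove (x : V) (T : Vtree V) : Option (Vtree V) := T.restrict {x}

/-- A vtree is linear when every internal node has a leaf child. -/
def Linear : Vtree V → Prop
  | leaf _ => True
  | node l r => ((∃ x, l = leaf x) ∨ (∃ x, r = leaf x)) ∧ l.Linear ∧ r.Linear

/-- The variable order induced by a linear vtree. -/
def order : Vtree V → List V
  | leaf x => [x]
  | node (leaf x) r => x :: r.order
  | node l (leaf x) => x :: l.order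
  | node l r => l.order ++ r.order

end Vtree

/-- Labels of leaf-layer nodes of a TDD: the positive literal, the negative
literal, and the constants 1 and 0. -/
inductive TLab where
  | pos | neg | one | zero
deriving DecidableEq

/-- Disjunction of two leaf labels (used when contracting twin leaf nodes). -/
def TLab.lor : TLab → TLab → TLab
  | .zero, a => a
  | a, .zero => a
  | .one, _ => .one
  | _, .one => .one
  | .pos, .pos => .pos
  | .neg, .neg => .neg
  | .pos, .neg => .one
  | .neg, .pos => .one

/-- A (non-deterministic) tree decision diagram structured along a vtree:
one layer of nodes (identified by natural numbers) per vtree node; leaf-layer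
nodes carry labels, internal-layer nodes carry their sets of input pairs. -/
inductive NTDD (V : Type) where
  | leaf (x : V) (ns : Finset ℕ) (lab : ℕ → TLab)
  | node (l r : NTDD V) (ns : Finset ℕ) (E : ℕ → Finset (ℕ × ℕ))

namespace NTDD

variable {V : Type}

/-- The vtree that an nTDD is structured along. -/
def shape : NTDD V → Vtree V
  | leaf x _ _ => .leaf x
  | node l r _ _ => .node l.shape r.shape

/-- The set of nodes of the top (root) layer. -/
def nodes : NTDD V → Finset ℕ
  | leaf _ ns _ => ns
  | node _ _ ns _ => ns

/-- The size of an nTDD: the total number of input pairs. -/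
def size : NTDD V → ℕ
  | leaf _ _ _ => 0
  | node l r ns E => l.size + r.size + ∑ g ∈ ns, (E g).card

/-- The width of an nTDD: the maximal cardinality of a layer. -/
def width : NTDD V → ℕ
  | leaf _ ns _ => ns.card
  | node l r ns _ => max ns.card (max l.width r.width)

/-- `C.sat g τ` : (the restriction of) the assignment `τ` is a model of the
function `f_g` computed by the top-layer node `g` of `C`. -/
def sat : NTDD V → ℕ → (V → Bool) → Prop
  | leaf x _ lab, g, τ =>
    match lab g with
    | .pos => τ x = true
    | .neg => τ x = false
    | .one => True
    | .zero => False
  | node l r _ E, g, τ => ∃ p ∈ E g, l.sat p.1 τ ∧ r.sat p.2 τ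

/-- Well-formedness: input pairs of top-layer nodes reference nodes of the
children layers. -/
def WF : NTDD V → Prop
  | leaf _ _ _ => True
  | node l r ns E => l.WF ∧ r.WF ∧ ∀ g ∈ ns, ∀ p ∈ E g, p.1 ∈ l.nodes ∧ p.2 ∈ r.nodes

/-- Determinism, turning an nTDD into a TDD: at each leaf layer at most one
node labeled by each of `x`, `¬x`, `1`, and if a node is labeled `1` then all
other nodes are labeled `0`; at each internal layer every pair is the input of
at most one node. -/
def Det : NTDD V → Prop
  | leaf _ ns lab =>
      (∀ g ∈ ns, ∀ g' ∈ ns, lab g = TLab.pos → lab g' = TLab.pos → g = g') ∧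
      (∀ g ∈ ns, ∀ g' ∈ ns, lab g = TLab.neg → lab g' = TLab.neg → g = g') ∧
      (∀ g ∈ ns, ∀ g' ∈ ns, lab g = TLab.one → lab g' = TLab.one → g = g') ∧
      (∀ g ∈ ns, lab g = TLab.one → ∀ g' ∈ ns, g' ≠ g → lab g' = TLab.zero)
  | node l r ns E => l.Det ∧ r.Det ∧ ∀ g ∈ ns, ∀ g' ∈ ns, g ≠ g' → Disjoint (E g) (E g')

/-- `C.Subdiagram D` : `D` is the sub-diagram of `C` sitting at some node of
the underlying vtree (including `C` itself). -/
def Subdiagram : NTDD V → NTDD V → Prop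
  | leaf x ns lab, D => D = leaf x ns lab
  | node l r ns E, D => D = node l r ns E ∨ l.Subdiagram D ∨ r.Subdiagram D

/-- A TDD is full if, at every layer, every assignment is a model of some node
of that layer. -/
def Full (C : NTDD V) : Prop :=
  ∀ D : NTDD V, C.Subdiagram D → ∀ τ : V → Bool, ∃ g ∈ D.nodes, D.sat g τ

end NTDD

/-- A choice of one node id per vtree node, mirroring the vtree: the data of a
certificate. -/
inductive IdTree where
  | leaf (g : ℕ)
  | node (g : ℕ) (l r : IdTree)

/-- The id chosen at the root. -/
def IdTree.root : IdTree → ℕ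
  | .leaf g => g
  | .node g _ _ => g

namespace NTDD

variable {V : Type}

/-- `C.IsCert P τ` : the choice `P` of one node per layer is a certificate for
`τ` in `C` (except for the root condition `P.root = out`, stated separately):
at a leaf labeled `x` the chosen node is labeled `1` or by a literal satisfied
by `τ`, and at an internal node the chosen pair of children nodes is an input
of the chosen node. -/
def IsCert : NTDD V → IdTree → (V → Bool) → Prop
  | leaf x ns lab, IdTree.leaf g, τ =>
      g ∈ ns ∧ (lab g = TLab.one ∨ (lab g = TLab.pos ∧ τ x = true) ∨
        (lab g = TLab.neg ∧ τ x = false))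
  | node l r ns E, IdTree.node g pl pr, τ =>
      g ∈ ns ∧ (pl.root, pr.root) ∈ E g ∧ l.IsCert pl τ ∧ r.IsCert pr τ
  | _, _, _ => False

/-- `SubPair C P D Q` : `D` is the sub-diagram of `C` at some vtree node `t`,
and `Q` is the corresponding part of the certificate data `P` (so `Q.root` is
the node that `P` chooses at `t`). -/
def SubPair : NTDD V → IdTree → NTDD V → IdTree → Prop
  | leaf x ns lab, P, D, Q => D = leaf x ns lab ∧ Q = P
  | node l r ns E, P, D, Q =>
      (D = node l r ns E ∧ Q = P) ∨
      (match P with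
       | IdTree.node _ pl pr => l.SubPair pl D Q ∨ r.SubPair pr D Q
       | _ => False)

/-- Contract the two top-layer nodes `g1, g1'` into the fresh node `v`. -/
def contractLayer (g1 g1' v : ℕ) : NTDD V → NTDD V
  | leaf x ns lab =>
      leaf x (insert v ((ns.erase g1).erase g1'))
        (fun g => if g = v then (lab g1).lor (lab g1') else lab g)
  | node l r ns E =>
      node l r (insert v ((ns.erase g1).erase g1'))
        (fun g => if g = v then E g1 ∪ E g1' else E g)

/-- Twin contraction of nodes `g1, g1'` of the left child layer into `v`:
they are merged in the left layer, and every input pair `(g1, g2)` or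
`(g1', g2)` of a top-layer node is replaced by `(v, g2)`. -/
def contractAtL (g1 g1' v : ℕ) : NTDD V → NTDD V
  | node l r ns E =>
      node (l.contractLayer g1 g1' v) r ns
        (fun g => (E g).image (fun p => if p.1 = g1 ∨ p.1 = g1' then (v, p.2) else p))
  | C => C

/-- Twin contraction of nodes `g1, g1'` of the right child layer into `v`. -/
def contractAtR (g1 g1' v : ℕ) : NTDD V → NTDD V
  | node l r ns E =>
      node l (r.contractLayer g1 g1' v) ns
        (fun g => (E g).image (fun p => if p.2 = g1 ∨ p.2 = g1' then (p.1, v) else p))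
  | C => C

open Classical in
/-- Replace the sub-diagram `D` of `C` by `D'` (in a proper vtree, sub-diagrams
at distinct positions are distinct, so this is unambiguous). -/
noncomputable def replace : NTDD V → NTDD V → NTDD V → NTDD V
  | leaf x ns lab, D, D' => if leaf x ns lab = D then D' else leaf x ns lab
  | node l r ns E, D, D' =>
      if node l r ns E = D then D'
      else node (l.replace D D') (r.replace D D') ns E

/-- `g1` and `g1'` are twins of the left child layer: they have the same
siblings with respect to every top-layer node. -/
def TwinsL (g1 g1' : ℕ) : NTDD V → Prop
  | node l _ ns E => g1 ∈ l.nodes ∧ g1' ∈ l.nodes ∧ g1 ≠ g1' ∧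
      ∀ g ∈ ns, ∀ g2 : ℕ, ((g1, g2) ∈ E g ↔ (g1', g2) ∈ E g)
  | _ => False

/-- `g1` and `g1'` are twins of the right child layer. -/
def TwinsR (g1 g1' : ℕ) : NTDD V → Prop
  | node _ r ns E => g1 ∈ r.nodes ∧ g1' ∈ r.nodes ∧ g1 ≠ g1' ∧
      ∀ g ∈ ns, ∀ g2 : ℕ, ((g2, g1) ∈ E g ↔ (g2, g1') ∈ E g)
  | _ => False

/-- The node set of the left child layer. -/
def leftNodes : NTDD V → Finset ℕ
  | node l _ _ _ => l.nodes
  | _ => ∅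

/-- The node set of the right child layer. -/
def rightNodes : NTDD V → Finset ℕ
  | node _ r _ _ => r.nodes
  | _ => ∅

end NTDD

/-- The number of distinct non-trivial `Y`-subfunctions of the Boolean
function `f` : functions of the form `σ ↦ f (Y.piecewise τ σ)` for some
`τ`, having at least one model. -/
noncomputable def subCount {V : Type} [DecidableEq V] (f : (V → Bool) → Prop) (Y : Finset V) : ℕ :=
  Nat.card {h : (V → Bool) → Prop |
    (∃ τ : V → Bool, h = fun σ => f (Y.piecewise τ σ)) ∧ ∃ σ : V → Bool, h σ}

/-- The number of distinct `Y`-subfunctions of `f` (trivial ones included). -/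
noncomputable def subCountAll {V : Type} [DecidableEq V] (f : (V → Bool) → Prop) (Y : Finset V) : ℕ :=
  Nat.card {h : (V → Bool) → Prop |
    ∃ τ : V → Bool, h = fun σ => f (Y.piecewise τ σ)}

/-! ### Auxiliary: product construction for conjunction -/

/-- Conjunction of two leaf labels. -/
def TLab.land : TLab → TLab → TLab
  | .zero, _ => .zero
  | _, .zero => .zero
  | .one, a => a
  | a, .one => a
  | .pos, .pos => .pos
  | .neg, .neg => .neg
  | .pos, .neg => .zero
  | .neg, .pos => .zero

namespace NTDD

variable {V : Type}

/-- Product (conjunction) of two nTDDs of the same shape. -/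
def prod : NTDD V → NTDD V → NTDD V
  | leaf x ns1 lab1, leaf _ ns2 lab2 =>
      leaf x ((ns1 ×ˢ ns2).image fun p => Nat.pair p.1 p.2)
        (fun g => (lab1 (Nat.unpair g).1).land (lab2 (Nat.unpair g).2))
  | node l1 r1 ns1 E1, node l2 r2 ns2 E2 =>
      node (l1.prod l2) (r1.prod r2) ((ns1 ×ˢ ns2).image fun p => Nat.pair p.1 p.2)
        (fun g => ((E1 (Nat.unpair g).1) ×ˢ (E2 (Nat.unpair g).2)).image
            fun q => (Nat.pair q.1.1 q.2.1, Nat.pair q.1.2 q.2.2))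
  | C, _ => C

lemma prod_shape : ∀ (C1 C2 : NTDD V), C1.shape = C2.shape →
    (C1.prod C2).shape = C1.shape
  | leaf x ns1 lab1, leaf y ns2 lab2, _ => rfl
  | leaf x ns1 lab1, node _ _ _ _, h => by simp [shape] at h
  | node _ _ _ _, leaf _ _ _, h => by simp [shape] at h
  | node l1 r1 ns1 E1, node l2 r2 ns2 E2, h => by
      simp only [shape, Vtree.node.injEq] at h
      simp only [prod, shape, Vtree.node.injEq]
      exact ⟨prod_shape _ _ h.1, prod_shape _ _ h.2⟩

lemma prod_nodes : ∀ (C1 C2 : NTDD V), C1.shape = C2.shape →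
    (C1.prod C2).nodes = (C1.nodes ×ˢ C2.nodes).image fun p => Nat.pair p.1 p.2
  | leaf x ns1 lab1, leaf y ns2 lab2, _ => rfl
  | leaf x ns1 lab1, node _ _ _ _, h => by simp [shape] at h
  | node _ _ _ _, leaf _ _ _, h => by simp [shape] at h
  | node l1 r1 ns1 E1, node l2 r2 ns2 E2, h => rfl

lemma prod_sat : ∀ (C1 C2 : NTDD V), C1.shape = C2.shape →
    ∀ (g1 g2 : ℕ) (τ : V → Bool),
      ((C1.prod C2).sat (Nat.pair g1 g2) τ ↔ (C1.sat g1 τ ∧ C2.sat g2 τ))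
  | leaf x ns1 lab1, leaf y ns2 lab2, h, g1, g2, τ => by
      simp only [shape, Vtree.leaf.injEq] at h
      subst h
      simp only [prod, sat, Nat.unpair_pair]
      rcases h1 : lab1 g1 <;> rcases h2 : lab2 g2 <;>
        simp [TLab.land, h1, h2]
  | leaf x ns1 lab1, node _ _ _ _, h, _, _, _ => by simp [shape] at h
  | node _ _ _ _, leaf _ _ _, h, _, _, _ => by simp [shape] at h
  | node l1 r1 ns1 E1, node l2 r2 ns2 E2, h, g1, g2, τ => by
      simp only [shape, Vtree.node.injEq] at h
      simp only [prod, sat, Nat.unpair_pair, Finset.mem_image, Finset.mem_product]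
      constructor
      · rintro ⟨p, ⟨⟨q1, q2⟩, ⟨hq1, hq2⟩, rfl⟩, hl, hr⟩
        rw [prod_sat l1 l2 h.1] at hl
        rw [prod_sat r1 r2 h.2] at hr
        exact ⟨⟨q1, hq1, hl.1, hr.1⟩, ⟨q2, hq2, hl.2, hr.2⟩⟩
      · rintro ⟨⟨q1, hq1, hl1, hr1⟩, ⟨q2, hq2, hl2, hr2⟩⟩
        refine ⟨(Nat.pair q1.1 q2.1, Nat.pair q1.2 q2.2), ⟨⟨q1, q2⟩, ⟨hq1, hq2⟩, rfl⟩, ?_, ?_⟩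
        · exact (prod_sat l1 l2 h.1 _ _ τ).2 ⟨hl1, hl2⟩
        · exact (prod_sat r1 r2 h.2 _ _ τ).2 ⟨hr1, hr2⟩

lemma prod_WF : ∀ (C1 C2 : NTDD V), C1.shape = C2.shape → C1.WF → C2.WF →
    (C1.prod C2).WF
  | leaf x ns1 lab1, leaf y ns2 lab2, _, _, _ => trivial
  | leaf x ns1 lab1, node _ _ _ _, h, _, _ => by simp [shape] at h
  | node _ _ _ _, leaf _ _ _, h, _, _ => by simp [shape] at h
  | node l1 r1 ns1 E1, node l2 r2 ns2 E2, h, w1, w2 => by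
      simp only [shape, Vtree.node.injEq] at h
      obtain ⟨w1l, w1r, w1E⟩ := w1
      obtain ⟨w2l, w2r, w2E⟩ := w2
      refine ⟨prod_WF _ _ h.1 w1l w2l, prod_WF _ _ h.2 w1r w2r, ?_⟩
      intro g hg p hp
      simp only [Finset.mem_image, Finset.mem_product] at hg
      obtain ⟨⟨a, b⟩, ⟨ha, hb⟩, rfl⟩ := hg
      simp only [Nat.unpair_pair, Finset.mem_image, Finset.mem_product] at hp
      obtain ⟨⟨q1, q2⟩, ⟨hq1, hq2⟩, rfl⟩ := hp
      have h1 := w1E a ha q1 hq1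
      have h2 := w2E b hb q2 hq2
      rw [prod_nodes l1 l2 h.1, prod_nodes r1 r2 h.2]
      simp only [Finset.mem_image, Finset.mem_product]
      exact ⟨⟨(q1.1, q2.1), ⟨h1.1, h2.1⟩, rfl⟩, ⟨(q1.2, q2.2), ⟨h1.2, h2.2⟩, rfl⟩⟩

lemma prod_Det : ∀ (C1 C2 : NTDD V), C1.shape = C2.shape → C1.Det → C2.Det →
    (C1.prod C2).Det
  | leaf x ns1 lab1, leaf y ns2 lab2, _, d1, d2 => by
      obtain ⟨p1, n1, o1, z1⟩ := d1
      obtain ⟨p2, n2, o2, z2⟩ := d2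
      -- sublemmas: uniqueness of {pos,one}-labeled and {neg,one}-labeled nodes
      have upos1 : ∀ a ∈ ns1, ∀ a' ∈ ns1,
          (lab1 a = .pos ∨ lab1 a = .one) → (lab1 a' = .pos ∨ lab1 a' = .one) → a = a' := by
        intro a ha a' ha' hh hh'
        rcases hh with h | h <;> rcases hh' with h' | h'
        · exact p1 a ha a' ha' h h'
        · by_contra hne; rw [z1 a' ha' h' a ha hne] at h; exact absurd h (by decide)
        · by_contra hne; rw [z1 a ha h a' ha' (Ne.symm hne)] at h'; exact absurd h' (by decide)
        · exact o1 a ha a' ha' h h'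
      have uneg1 : ∀ a ∈ ns1, ∀ a' ∈ ns1,
          (lab1 a = .neg ∨ lab1 a = .one) → (lab1 a' = .neg ∨ lab1 a' = .one) → a = a' := by
        intro a ha a' ha' hh hh'
        rcases hh with h | h <;> rcases hh' with h' | h'
        · exact n1 a ha a' ha' h h'
        · by_contra hne; rw [z1 a' ha' h' a ha hne] at h; exact absurd h (by decide)
        · by_contra hne; rw [z1 a ha h a' ha' (Ne.symm hne)] at h'; exact absurd h' (by decide)
        · exact o1 a ha a' ha' h h'
      have upos2 : ∀ a ∈ ns2, ∀ a' ∈ ns2,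
          (lab2 a = .pos ∨ lab2 a = .one) → (lab2 a' = .pos ∨ lab2 a' = .one) → a = a' := by
        intro a ha a' ha' hh hh'
        rcases hh with h | h <;> rcases hh' with h' | h'
        · exact p2 a ha a' ha' h h'
        · by_contra hne; rw [z2 a' ha' h' a ha hne] at h; exact absurd h (by decide)
        · by_contra hne; rw [z2 a ha h a' ha' (Ne.symm hne)] at h'; exact absurd h' (by decide)
        · exact o2 a ha a' ha' h h'
      have uneg2 : ∀ a ∈ ns2, ∀ a' ∈ ns2,
          (lab2 a = .neg ∨ lab2 a = .one) → (lab2 a' = .neg ∨ lab2 a' = .one) → a = a' := by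
        intro a ha a' ha' hh hh'
        rcases hh with h | h <;> rcases hh' with h' | h'
        · exact n2 a ha a' ha' h h'
        · by_contra hne; rw [z2 a' ha' h' a ha hne] at h; exact absurd h (by decide)
        · by_contra hne; rw [z2 a ha h a' ha' (Ne.symm hne)] at h'; exact absurd h' (by decide)
        · exact o2 a ha a' ha' h h'
      refine ⟨?_, ?_, ?_, ?_⟩
      · intro g hg g' hg' hl hl'
        simp only [prod, Finset.mem_image, Finset.mem_product] at hg hg' hl hl'
        obtain ⟨⟨a, b⟩, ⟨ha, hb⟩, rfl⟩ := hg
        obtain ⟨⟨a', b'⟩, ⟨ha', hb'⟩, rfl⟩ := hg'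
        simp only [Nat.unpair_pair] at hl hl'
        have hca : (lab1 a = .pos ∨ lab1 a = .one) ∧ (lab2 b = .pos ∨ lab2 b = .one) := by
          rcases h1 : lab1 a <;> rcases h2 : lab2 b <;> simp [TLab.land, h1, h2] at hl ⊢
        have hca' : (lab1 a' = .pos ∨ lab1 a' = .one) ∧ (lab2 b' = .pos ∨ lab2 b' = .one) := by
          rcases h1 : lab1 a' <;> rcases h2 : lab2 b' <;> simp [TLab.land, h1, h2] at hl' ⊢
        rw [upos1 a ha a' ha' hca.1 hca'.1, upos2 b hb b' hb' hca.2 hca'.2]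
      · intro g hg g' hg' hl hl'
        simp only [prod, Finset.mem_image, Finset.mem_product] at hg hg' hl hl'
        obtain ⟨⟨a, b⟩, ⟨ha, hb⟩, rfl⟩ := hg
        obtain ⟨⟨a', b'⟩, ⟨ha', hb'⟩, rfl⟩ := hg'
        simp only [Nat.unpair_pair] at hl hl'
        have hca : (lab1 a = .neg ∨ lab1 a = .one) ∧ (lab2 b = .neg ∨ lab2 b = .one) := by
          rcases h1 : lab1 a <;> rcases h2 : lab2 b <;> simp [TLab.land, h1, h2] at hl ⊢
        have hca' : (lab1 a' = .neg ∨ lab1 a' = .one) ∧ (lab2 b' = .neg ∨ lab2 b' = .one) := by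
          rcases h1 : lab1 a' <;> rcases h2 : lab2 b' <;> simp [TLab.land, h1, h2] at hl' ⊢
        rw [uneg1 a ha a' ha' hca.1 hca'.1, uneg2 b hb b' hb' hca.2 hca'.2]
      · intro g hg g' hg' hl hl'
        simp only [prod, Finset.mem_image, Finset.mem_product] at hg hg' hl hl'
        obtain ⟨⟨a, b⟩, ⟨ha, hb⟩, rfl⟩ := hg
        obtain ⟨⟨a', b'⟩, ⟨ha', hb'⟩, rfl⟩ := hg'
        simp only [Nat.unpair_pair] at hl hl'
        have hca : lab1 a = .one ∧ lab2 b = .one := by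
          rcases h1 : lab1 a <;> rcases h2 : lab2 b <;> simp [TLab.land, h1, h2] at hl ⊢
        have hca' : lab1 a' = .one ∧ lab2 b' = .one := by
          rcases h1 : lab1 a' <;> rcases h2 : lab2 b' <;> simp [TLab.land, h1, h2] at hl' ⊢
        rw [o1 a ha a' ha' hca.1 hca'.1, o2 b hb b' hb' hca.2 hca'.2]
      · intro g hg hl g' hg' hne
        simp only [prod, Finset.mem_image, Finset.mem_product] at hg hg' hl ⊢
        obtain ⟨⟨a, b⟩, ⟨ha, hb⟩, rfl⟩ := hg
        obtain ⟨⟨a', b'⟩, ⟨ha', hb'⟩, rfl⟩ := hg'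
        simp only [Nat.unpair_pair] at hl ⊢
        have hca : lab1 a = .one ∧ lab2 b = .one := by
          rcases h1 : lab1 a <;> rcases h2 : lab2 b <;> simp [TLab.land, h1, h2] at hl ⊢
        by_cases hae : a' = a
        · subst hae
          have hbe : b' ≠ b := fun hbe => hne (by rw [hbe])
          rw [hca.1, z2 b hb hca.2 b' hb' hbe]
          rcases lab2 b' <;> decide
        · rw [z1 a ha hca.1 a' ha' hae]
          rcases lab2 b' <;> decide
  | leaf x ns1 lab1, node _ _ _ _, h, _, _ => by simp [shape] at h
  | node _ _ _ _, leaf _ _ _, h, _, _ => by simp [shape] at h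
  | node l1 r1 ns1 E1, node l2 r2 ns2 E2, h, d1, d2 => by
      simp only [shape, Vtree.node.injEq] at h
      obtain ⟨d1l, d1r, d1E⟩ := d1
      obtain ⟨d2l, d2r, d2E⟩ := d2
      refine ⟨prod_Det _ _ h.1 d1l d2l, prod_Det _ _ h.2 d1r d2r, ?_⟩
      intro g hg g' hg' hne
      simp only [Finset.mem_image, Finset.mem_product] at hg hg'
      obtain ⟨⟨a, b⟩, ⟨ha, hb⟩, rfl⟩ := hg
      obtain ⟨⟨a', b'⟩, ⟨ha', hb'⟩, rfl⟩ := hg'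
      rw [Finset.disjoint_left]
      rintro p hp hp'
      simp only [Nat.unpair_pair, Finset.mem_image, Finset.mem_product] at hp hp'
      obtain ⟨⟨q1, q2⟩, ⟨hq1, hq2⟩, rfl⟩ := hp
      obtain ⟨⟨q1', q2'⟩, ⟨hq1', hq2'⟩, heq⟩ := hp'
      simp only [Prod.mk.injEq, Nat.pair_eq_pair] at heq
      have hq1e : q1' = q1 := Prod.ext heq.1.1 heq.2.1
      have hq2e : q2' = q2 := Prod.ext heq.1.2 heq.2.2
      subst hq1e; subst hq2e
      by_cases hae : a = a'
      · subst hae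
        have hbe : b ≠ b' := fun hbe => hne (by rw [hbe])
        exact Finset.disjoint_left.1 (d2E b hb b' hb' hbe) hq2 hq2'
      · exact Finset.disjoint_left.1 (d1E a ha a' ha' hae) hq1 hq1'

lemma prod_size : ∀ (C1 C2 : NTDD V), C1.shape = C2.shape →
    (C1.prod C2).size ≤ C1.size * C2.size
  | leaf _ _ _, leaf _ _ _, _ => le_refl _
  | leaf x ns1 lab1, node _ _ _ _, h => by simp [shape] at h
  | node _ _ _ _, leaf _ _ _, h => by simp [shape] at h
  | node l1 r1 ns1 E1, node l2 r2 ns2 E2, h => by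
      simp only [shape, Vtree.node.injEq] at h
      have hl := prod_size l1 l2 h.1
      have hr := prod_size r1 r2 h.2
      simp only [prod, size]
      have htop : ∑ g ∈ (ns1 ×ˢ ns2).image (fun p => Nat.pair p.1 p.2),
          (((E1 (Nat.unpair g).1) ×ˢ (E2 (Nat.unpair g).2)).image
            (fun q => (Nat.pair q.1.1 q.2.1, Nat.pair q.1.2 q.2.2))).card ≤
          (∑ g ∈ ns1, (E1 g).card) * (∑ g ∈ ns2, (E2 g).card) := by
        rw [Finset.sum_image]
        · rw [Finset.sum_mul_sum, Finset.sum_product]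
          refine Finset.sum_le_sum fun a ha => Finset.sum_le_sum fun b hb => ?_
          simp only [Nat.unpair_pair]
          calc _ ≤ ((E1 a) ×ˢ (E2 b)).card := Finset.card_image_le
            _ = _ := Finset.card_product _ _
        · intro p hp q hq hpq
          rw [Nat.pair_eq_pair] at hpq
          exact Prod.ext hpq.1 hpq.2
      calc (l1.prod l2).size + (r1.prod r2).size + _
          ≤ l1.size * l2.size + r1.size * r2.size +
            (∑ g ∈ ns1, (E1 g).card) * (∑ g ∈ ns2, (E2 g).card) := by
            exact add_le_add (add_le_add hl hr) htop
        _ ≤ (l1.size + r1.size + ∑ g ∈ ns1, (E1 g).card) *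
            (l2.size + r2.size + ∑ g ∈ ns2, (E2 g).card) := by
            generalize l1.size = a; generalize l2.size = b
            generalize r1.size = c; generalize r2.size = d
            generalize (∑ g ∈ ns1, (E1 g).card) = e
            generalize (∑ g ∈ ns2, (E2 g).card) = f
            have hx : (a+c+e) * (b+d+f) =
                a*b + c*d + e*f + (a*d+a*f+c*b+c*f+e*b+e*d) := by ring
            omega

lemma prod_width : ∀ (C1 C2 : NTDD V), C1.shape = C2.shape →
    (C1.prod C2).width ≤ C1.width * C2.width
  | leaf x ns1 lab1, leaf y ns2 lab2, _ => by
      simp only [prod, width]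
      calc _ ≤ (ns1 ×ˢ ns2).card := Finset.card_image_le
        _ = _ := Finset.card_product _ _
  | leaf x ns1 lab1, node _ _ _ _, h => by simp [shape] at h
  | node _ _ _ _, leaf _ _ _, h => by simp [shape] at h
  | node l1 r1 ns1 E1, node l2 r2 ns2 E2, h => by
      simp only [shape, Vtree.node.injEq] at h
      have hl := prod_width l1 l2 h.1
      have hr := prod_width r1 r2 h.2
      simp only [prod, width]
      have h0 : ((ns1 ×ˢ ns2).image fun p => Nat.pair p.1 p.2).card ≤ ns1.card * ns2.card := by
        calc _ ≤ (ns1 ×ˢ ns2).card := Finset.card_image_le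
          _ = _ := Finset.card_product _ _
      refine max_le ?_ (max_le ?_ ?_)
      · exact h0.trans (Nat.mul_le_mul (le_max_left _ _) (le_max_left _ _))
      · exact hl.trans (Nat.mul_le_mul ((le_max_left _ _).trans (le_max_right _ _))
          ((le_max_left _ _).trans (le_max_right _ _)))
      · exact hr.trans (Nat.mul_le_mul ((le_max_right _ _).trans (le_max_right _ _))
          ((le_max_right _ _).trans (le_max_right _ _)))

end NTDD

/-- Conjunction: for TDDs `C1, C2` respecting the same vtree
`T` over a finite variable set `X`, of widths `k` and `k'`, there exists a
TDD respecting `T` computing `f_{C1} ∧ f_{C2}`, of size at most `|C1|·|C2|`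
and width at most `k·k'`. -/
theorem stmt5 {V : Type} [DecidableEq V] (X : Finset V) (T : Vtree V)
    (hTp : T.Proper) (hTX : T.vars = X)
    (C1 : NTDD V) (out1 : ℕ) (hsh1 : C1.shape = T) (hWF1 : C1.WF) (hDet1 : C1.Det)
    (hout1 : out1 ∈ C1.nodes)
    (C2 : NTDD V) (out2 : ℕ) (hsh2 : C2.shape = T) (hWF2 : C2.WF) (hDet2 : C2.Det)
    (hout2 : out2 ∈ C2.nodes)
    (k k' : ℕ) (hk : C1.width = k) (hk' : C2.width = k') :
    ∃ (C : NTDD V) (out : ℕ),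
      C.shape = T ∧ C.WF ∧ C.Det ∧ out ∈ C.nodes ∧
      C.size ≤ C1.size * C2.size ∧ C.width ≤ k * k' ∧
      ∀ τ : V → Bool, (C.sat out τ ↔ (C1.sat out1 τ ∧ C2.sat out2 τ)) := by
  refine ⟨C1.prod C2, Nat.pair out1 out2, ?_, ?_, ?_, ?_, ?_, ?_, ?_⟩
  all_goals {
    first
    | exact (NTDD.prod_shape C1 C2 (hsh1.trans hsh2.symm)).trans hsh1
    | exact NTDD.prod_WF C1 C2 (hsh1.trans hsh2.symm) hWF1 hWF2
    | exact NTDD.prod_Det C1 C2 (hsh1.trans hsh2.symm) hDet1 hDet2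
    | (rw [NTDD.prod_nodes C1 C2 (hsh1.trans hsh2.symm)]
       exact Finset.mem_image.2 ⟨(out1, out2), Finset.mem_product.2 ⟨hout1, hout2⟩, rfl⟩)
    | exact NTDD.prod_size C1 C2 (hsh1.trans hsh2.symm)
    | exact hk ▸ hk' ▸ NTDD.prod_width C1 C2 (hsh1.trans hsh2.symm)
    | exact fun τ => NTDD.prod_sat C1 C2 (hsh1.trans hsh2.symm) out1 out2 τ
  }
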